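/- For p ∈ M₊¹ and q on the geodesic through 1 and p (i.e., q ∈ M₊¹ with pure part q₀ = λ·p₀ for some λ ∈ ℝ, where q₀ = q - tr(q)/2), the pure part of p·q·p is again a real multiple of p₀. Hence the geodesic g̃(1,p) is invariant under the action q ↦ p·q·p† = p·q·p. -/

import Mathlib

open Quaternion

/-- The Macfarlane involution `†` on `(1,1/ℂ)`. -/
def dag (q : ℍ[ℂ,1,1]) : ℍ[ℂ,1,1] :=
  ⟨starRingEnd ℂ q.re, starRingEnd ℂ q.imI, starRingEnd ℂ q.imJ, -(starRingEnd ℂ q.imK)⟩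

/-- The reduced norm on `(1,1/ℂ)`. -/
def qnorm (q : ℍ[ℂ,1,1]) : ℂ := q.re ^ 2 - q.imI ^ 2 - q.imJ ^ 2 + q.imK ^ 2

/-- Membership in the hyperboloid `M₊¹`. -/
def memM1plus (p : ℍ[ℂ,1,1]) : Prop := dag p = p ∧ qnorm p = 1 ∧ 0 < p.re.re

lemma I3_re : (Complex.I ^ 3).re = 0 := by
  simp [pow_succ, Complex.I_sq]

lemma I3_im : (Complex.I ^ 3).im = -1 := by
  simp [pow_succ, Complex.I_sq]

/-- If `p, q ∈ M₊¹` and the pure part `q₀` of `q` is a real multiple of `p₀`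
(i.e. `q` lies on the geodesic through `1` and `p`), then `p·q·p† = p·q·p` and
its pure part is again a real multiple of `p₀`: the geodesic `g̃(1,p)` is
invariant under the action of `p`. -/
theorem stmt_10 : ∀ p q : ℍ[ℂ,1,1], memM1plus p → memM1plus q →
    (∃ l : ℝ, q.im = (l : ℂ) • p.im) →
    p * q * dag p = p * q * p ∧ ∃ m : ℝ, (p * q * dag p).im = (m : ℂ) • p.im := by
  rintro p q ⟨hp, -, -⟩ ⟨hq, -, -⟩ ⟨l, hl⟩
  rw [hp]
  refine ⟨rfl, ?_⟩
  -- component facts for p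
  have hpre : p.re = ((p.re.re : ℝ) : ℂ) := by
    have := congrArg QuaternionAlgebra.re hp
    simp [dag] at this
    exact (Complex.conj_eq_iff_re.mp this).symm
  have hpi : p.imI = ((p.imI.re : ℝ) : ℂ) := by
    have := congrArg QuaternionAlgebra.imI hp
    simp [dag] at this
    exact (Complex.conj_eq_iff_re.mp this).symm
  have hpj : p.imJ = ((p.imJ.re : ℝ) : ℂ) := by
    have := congrArg QuaternionAlgebra.imJ hp
    simp [dag] at this
    exact (Complex.conj_eq_iff_re.mp this).symm
  have hpk : p.imK = ((p.imK.im : ℝ) : ℂ) * Complex.I := by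
    have := congrArg QuaternionAlgebra.imK hp
    simp [dag] at this
    have hre : p.imK.re = 0 := by
      have := congrArg Complex.re this
      simp at this; linarith
    apply Complex.ext <;> simp [hre]
  have hqre : q.re = ((q.re.re : ℝ) : ℂ) := by
    have := congrArg QuaternionAlgebra.re hq
    simp [dag] at this
    exact (Complex.conj_eq_iff_re.mp this).symm
  have hqi : q.imI = (l : ℂ) * p.imI := congrArg QuaternionAlgebra.imI hl
  have hqj : q.imJ = (l : ℂ) * p.imJ := congrArg QuaternionAlgebra.imJ hl
  have hqk : q.imK = (l : ℂ) * p.imK := congrArg QuaternionAlgebra.imK hl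
  refine ⟨2 * p.re.re * q.re.re + l * (p.re.re ^ 2 + p.imI.re ^ 2 + p.imJ.re ^ 2 + p.imK.im ^ 2), ?_⟩
  ext <;>
    simp only [QuaternionAlgebra.re_im, QuaternionAlgebra.imI_im, QuaternionAlgebra.imJ_im,
      QuaternionAlgebra.imK_im, QuaternionAlgebra.re_smul, QuaternionAlgebra.imI_smul,
      QuaternionAlgebra.imJ_smul, QuaternionAlgebra.imK_smul, QuaternionAlgebra.re_mul,
      QuaternionAlgebra.imI_mul, QuaternionAlgebra.imJ_mul, QuaternionAlgebra.imK_mul,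
      smul_eq_mul, mul_zero] <;>
    rw [hqi, hqj, hqk, hqre] <;>
    rw [hpre, hpi, hpj, hpk] <;>
    push_cast <;>
    ring_nf <;>
    simp [Complex.ext_iff, ← Complex.ofReal_pow, pow_succ, Complex.I_sq, I3_re, I3_im] <;>
    ring
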